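/- Let the signed permutation (λ, π) ∈ C_2 ≀ Sym_k act on faces of the k-dimensional hypercube, where λ = 1 and π = (i j) is a transposition. Then the induced permutation σ_r of faces of rank r < k - 1 moves exactly 2^{k-r}( (1/2)·C(k-2, r) + 2·C(k-2, r-1) ) faces, namely those F with F(i) ≠ F(j), and factorizes into half as many disjoint transpositions. -/

import Mathlib

/-- The action of a signed permutation `(ε, π) ∈ C_2 ≀ Sym_k` on the faces `{-1,0,1}^k` of the
hypercube, as a permutation. -/
def cubeEquiv {k : ℕ} (ε : Fin k → Bool) (π : Equiv.Perm (Fin k)) :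
    Equiv.Perm (Fin k → SignType) where
  toFun F := fun j => cond (ε j) (-(F (π⁻¹ j))) (F (π⁻¹ j))
  invFun F := fun i => cond (ε (π i)) (-(F (π i))) (F (π i))
  left_inv F := by funext i; simp; cases h : ε (π i) <;> simp [h]
  right_inv F := by funext j; simp; cases h : ε j <;> simp [h]

/-- The number of zero entries (the rank) of a face of the hypercube. -/
def zeroCount {k : ℕ} (F : Fin k → SignType) : ℕ :=
  (Finset.univ.filter fun i => F i = 0).card

lemma zeroCount_cubeEquiv {k : ℕ} (ε : Fin k → Bool) (π : Equiv.Perm (Fin k))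
    (F : Fin k → SignType) : zeroCount (cubeEquiv ε π F) = zeroCount F := by
  unfold zeroCount cubeEquiv
  simp only [Equiv.coe_fn_mk]
  have h1 : (Finset.univ.filter fun j => (cond (ε j) (-(F (π⁻¹ j))) (F (π⁻¹ j))) = 0)
      = Finset.univ.filter fun j => F (π⁻¹ j) = 0 := by
    ext j
    simp only [Finset.mem_filter, Finset.mem_univ, true_and]
    cases h : ε j
    · simp [h]
    · simp only [h, cond_true]
      cases hF : F (π⁻¹ j) <;> simp [hF]
  rw [h1]
  apply Finset.card_bij' (fun j _ => π⁻¹ j) (fun i _ => π i)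
  · intro j hj; simp at hj ⊢; exact hj
  · intro i hi; simp at hi ⊢; exact hi
  · intro j _; simp
  · intro i _; simp

/-- The permutation induced by `cubeEquiv ε π` on the faces of rank `r`. -/
def cubeRankPerm {k : ℕ} (ε : Fin k → Bool) (π : Equiv.Perm (Fin k)) (r : ℕ) :
    Equiv.Perm {F : Fin k → SignType // zeroCount F = r} :=
  (cubeEquiv ε π).subtypePerm (fun F => by rw [zeroCount_cubeEquiv])

section CubeHelpers
open Finset

lemma zfilter_eq {k : ℕ} (s : Finset (Fin k)) (F : Fin k → SignType) :
    (univ.filter fun x => F x = 0) = s ↔ ∀ x, F x = 0 ↔ x ∈ s := by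
  simp [Finset.ext_iff]

/-- number of faces with prescribed zero set -/
lemma fiber_card {k : ℕ} (s : Finset (Fin k)) :
    (univ.filter fun F : Fin k → SignType => (univ.filter fun x => F x = 0) = s).card
      = 2 ^ (k - s.card) := by
  simp only [zfilter_eq]
  have heq : (univ.filter fun F : Fin k → SignType => ∀ x, F x = 0 ↔ x ∈ s)
      = Fintype.piFinset (fun x => if x ∈ s then {0} else {-1, 1}) := by
    ext F
    simp only [mem_filter, mem_univ, true_and, Fintype.mem_piFinset]
    constructor
    · intro h x
      by_cases hx : x ∈ s
      · simp [hx, (h x).2 hx]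
      · simp only [hx, if_neg, if_false]
        have : F x ≠ 0 := fun h0 => hx ((h x).1 h0)
        cases hF : F x <;> simp_all
    · intro h x
      have := h x
      by_cases hx : x ∈ s <;> simp [hx] at this ⊢
      · exact this
      · rcases this with h1 | h1 <;> simp [h1]
  rw [heq, Fintype.card_piFinset]
  have h : ∀ x : Fin k, (if x ∈ s then ({0} : Finset SignType) else {-1, 1}).card
      = if x ∈ s then 1 else 2 := by intro x; split <;> decide
  simp only [h]
  rw [Finset.prod_ite, Finset.prod_const, Finset.prod_const, one_pow, one_mul]
  congr 1
  rw [Finset.filter_not, Finset.card_sdiff_of_subset (by simp [Finset.subset_iff]), Finset.card_univ,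
    Fintype.card_fin]
  congr 1
  simp [Finset.filter_mem_eq_inter]

/-- the fiber where neither i nor j is zero, with F i ≠ F j, is half -/
lemma fiber_half {k : ℕ} (s : Finset (Fin k)) (i j : Fin k) (hij : i ≠ j)
    (hi : i ∉ s) (hj : j ∉ s) :
    (univ.filter fun F : Fin k → SignType =>
        (univ.filter fun x => F x = 0) = s ∧ F i ≠ F j).card = 2 ^ (k - s.card - 1) := by
  obtain ⟨T, hT⟩ : ∃ T : Finset (Fin k → SignType),
      T = univ.filter fun F => (univ.filter fun x => F x = 0) = s := ⟨_, rfl⟩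
  have key : ∀ a b : SignType, a ≠ 0 → b ≠ 0 → (a ≠ b ↔ -a = b) := by decide
  have hmem : ∀ F ∈ T, F i ≠ 0 ∧ F j ≠ 0 := by
    intro F hF
    simp only [hT, mem_filter, mem_univ, true_and, zfilter_eq] at hF
    exact ⟨fun h0 => hi ((hF i).1 h0), fun h0 => hj ((hF j).1 h0)⟩
  have hN : ∀ F ∈ T, Function.update F i (-(F i)) ∈ T := by
    intro F hF
    simp only [hT, mem_filter, mem_univ, true_and, zfilter_eq] at hF ⊢
    intro x
    rcases eq_or_ne x i with rfl | hx
    · have hneg : ∀ a : SignType, (-a = 0 ↔ a = 0) := by decide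
      rw [Function.update_self, hneg]; exact hF x
    · rw [Function.update_of_ne hx]; exact hF x
  have hcard : (T.filter fun F => F i ≠ F j).card = (T.filter fun F => F i = F j).card := by
    apply Finset.card_bij' (fun F _ => Function.update F i (-(F i)))
      (fun F _ => Function.update F i (-(F i)))
    · intro F _
      funext x
      rcases eq_or_ne x i with rfl | hx
      · simp [Function.update_self]
      · simp [Function.update_of_ne hx]
    · intro F _
      funext x
      rcases eq_or_ne x i with rfl | hx
      · simp [Function.update_self]
      · simp [Function.update_of_ne hx]
    · intro F hF
      simp only [mem_filter] at hF ⊢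
      obtain ⟨hFT, hne⟩ := hF
      refine ⟨hN F hFT, ?_⟩
      rw [Function.update_self, Function.update_of_ne (Ne.symm hij)]
      exact (key _ _ (hmem F hFT).1 (hmem F hFT).2).1 hne
    · intro F hF
      simp only [mem_filter] at hF ⊢
      obtain ⟨hFT, heq⟩ := hF
      refine ⟨hN F hFT, ?_⟩
      rw [Function.update_self, Function.update_of_ne (Ne.symm hij)]
      have key2 : ∀ a : SignType, a ≠ 0 → -a ≠ a := by decide
      intro hc
      rw [← heq] at hc
      exact key2 (F i) (hmem F hFT).1 hc
  have hsum : (T.filter fun F => F i ≠ F j).card + (T.filter fun F => F i = F j).card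
      = T.card := by
    have h := Finset.card_filter_add_card_filter_not (s := T)
      (p := fun F => F i ≠ F j)
    have he : (T.filter fun a => ¬ (a i ≠ a j)) = T.filter fun F => F i = F j := by
      apply Finset.filter_congr
      intro F _
      simp
    rw [he] at h
    exact h
  have hTcard : T.card = 2 ^ (k - s.card) := by rw [hT]; exact fiber_card s
  have hk : 1 ≤ k - s.card := by
    have hlt : s.card < k := by
      have hsub : s ⊆ univ.erase i := fun x hx => mem_erase.mpr ⟨fun h => hi (h ▸ hx), mem_univ x⟩
      calc s.card ≤ (univ.erase i).card := card_le_card hsub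
        _ = k - 1 := by rw [card_erase_of_mem (mem_univ i), card_univ, Fintype.card_fin]
        _ < k := Nat.sub_lt i.pos one_pos
    exact Nat.sub_pos_of_lt hlt
  have hgoal : (univ.filter fun F : Fin k → SignType =>
      (univ.filter fun x => F x = 0) = s ∧ F i ≠ F j) = T.filter fun F => F i ≠ F j := by
    rw [hT, Finset.filter_filter]
  rw [hgoal]
  have h2 : 2 ^ (k - s.card) = 2 * 2 ^ (k - s.card - 1) := by
    conv_lhs => rw [show k - s.card = (k - s.card - 1) + 1 from
      (Nat.succ_pred_eq_of_pos hk).symm]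
    rw [pow_succ']
  have hfin : 2 * (T.filter fun F => F i ≠ F j).card = 2 * 2 ^ (k - s.card - 1) := by
    rw [two_mul]
    nth_rewrite 2 [hcard]
    rw [hsum, hTcard, h2]
  exact Nat.eq_of_mul_eq_mul_left (by norm_num) hfin


lemma erase_erase_card {k : ℕ} (i j : Fin k) (hij : i ≠ j) :
    ((univ.erase i).erase j).card = k - 2 := by
  rw [card_erase_of_mem (mem_erase.mpr ⟨hij.symm, mem_univ j⟩),
    card_erase_of_mem (mem_univ i), card_univ, Fintype.card_fin]
  omega

lemma cardT00 {k r : ℕ} (i j : Fin k) (hij : i ≠ j) :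
    ((univ.powersetCard r).filter fun s : Finset (Fin k) => i ∉ s ∧ j ∉ s).card
      = Nat.choose (k - 2) r := by
  have he : ((univ.powersetCard r).filter fun s : Finset (Fin k) => i ∉ s ∧ j ∉ s)
      = ((univ.erase i).erase j).powersetCard r := by
    ext s
    rw [mem_filter, mem_powersetCard_univ, mem_powersetCard]
    constructor
    · rintro ⟨hc, hi, hj⟩
      refine ⟨fun x hx => ?_, hc⟩
      exact mem_erase.mpr ⟨fun h => hj (h ▸ hx), mem_erase.mpr ⟨fun h => hi (h ▸ hx), mem_univ x⟩⟩
    · rintro ⟨hsub, hc⟩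
      refine ⟨hc, fun hi => ?_, fun hj => ?_⟩
      · exact (mem_erase.mp (mem_erase.mp (hsub hi)).2).1 rfl
      · exact (mem_erase.mp (hsub hj)).1 rfl
  rw [he, card_powersetCard, erase_erase_card i j hij]

lemma cardT10 {k r : ℕ} (i j : Fin k) (hij : i ≠ j) (hr1 : 1 ≤ r) :
    ((univ.powersetCard r).filter fun s : Finset (Fin k) => i ∈ s ∧ j ∉ s).card
      = Nat.choose (k - 2) (r - 1) := by
  have hb : ((univ.powersetCard r).filter fun s : Finset (Fin k) => i ∈ s ∧ j ∉ s).card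
      = (((univ.erase i).erase j).powersetCard (r - 1)).card := by
    apply Finset.card_bij (fun s _ => s.erase i)
    · intro s hs
      simp only [mem_filter, mem_powersetCard_univ] at hs
      obtain ⟨hc, hi, hj⟩ := hs
      rw [mem_powersetCard]
      constructor
      · intro x hx
        obtain ⟨hxi, hxs⟩ := mem_erase.mp hx
        exact mem_erase.mpr ⟨fun h => hj (h ▸ hxs), mem_erase.mpr ⟨hxi, mem_univ x⟩⟩
      · rw [card_erase_of_mem hi, hc]
    · intro s hs t ht h
      simp only [mem_filter, mem_powersetCard_univ] at hs ht
      rw [← insert_erase hs.2.1, ← insert_erase ht.2.1, h]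
    · intro t ht
      rw [mem_powersetCard] at ht
      obtain ⟨hsub, hc⟩ := ht
      have hit : i ∉ t := fun h => (mem_erase.mp (mem_erase.mp (hsub h)).2).1 rfl
      have hjt : j ∉ t := fun h => (mem_erase.mp (hsub h)).1 rfl
      refine ⟨insert i t, ?_, ?_⟩
      · simp only [mem_filter, mem_powersetCard_univ]
        refine ⟨?_, mem_insert_self i t, ?_⟩
        · rw [card_insert_of_notMem hit, hc]
          omega
        · simp only [mem_insert]
          rintro (h | h)
          · exact hij h.symm
          · exact hjt h
      · rw [erase_insert hit]
  rw [hb, card_powersetCard, erase_erase_card i j hij]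

lemma cardT01 {k r : ℕ} (i j : Fin k) (hij : i ≠ j) (hr1 : 1 ≤ r) :
    ((univ.powersetCard r).filter fun s : Finset (Fin k) => i ∉ s ∧ j ∈ s).card
      = Nat.choose (k - 2) (r - 1) := by
  have := cardT10 j i hij.symm hr1
  rw [← this]
  congr 1
  apply Finset.filter_congr
  intro s _
  constructor
  · rintro ⟨h1, h2⟩; exact ⟨h2, h1⟩
  · rintro ⟨h1, h2⟩; exact ⟨h2, h1⟩

lemma count_main {k r : ℕ} (hr : r + 1 < k) (i j : Fin k) (hij : i ≠ j) :
    (univ.filter fun F : Fin k → SignType => zeroCount F = r ∧ F i ≠ F j).card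
      = 2 ^ (k - r - 1) * Nat.choose (k - 2) r
        + (if r = 0 then 0 else 2 ^ (k - r + 1) * Nat.choose (k - 2) (r - 1)) := by
  classical
  have hstep : (univ.filter fun F : Fin k → SignType => zeroCount F = r ∧ F i ≠ F j).card
      = ∑ s ∈ (univ : Finset (Fin k)).powersetCard r,
          ((univ.filter fun F : Fin k → SignType => zeroCount F = r ∧ F i ≠ F j).filter
            fun F => (univ.filter fun x => F x = 0) = s).card := by
    apply Finset.card_eq_sum_card_fiberwise
    intro F hF
    simp only [Finset.mem_coe]
    rw [mem_powersetCard_univ]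
    simp only [Finset.mem_coe, mem_filter, mem_univ, true_and] at hF
    exact hF.1
  rw [hstep]
  -- rewrite each fiber
  have hfib : ∀ s ∈ (univ : Finset (Fin k)).powersetCard r,
      ((univ.filter fun F : Fin k → SignType => zeroCount F = r ∧ F i ≠ F j).filter
          fun F => (univ.filter fun x => F x = 0) = s).card
        = (if i ∈ s then (if j ∈ s then 0 else 2 ^ (k - r))
            else (if j ∈ s then 2 ^ (k - r) else 2 ^ (k - r - 1))) := by
    intro s hs
    rw [mem_powersetCard_univ] at hs
    have hset : ((univ.filter fun F : Fin k → SignType => zeroCount F = r ∧ F i ≠ F j).filter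
          fun F => (univ.filter fun x => F x = 0) = s)
        = univ.filter fun F : Fin k → SignType =>
            (univ.filter fun x => F x = 0) = s ∧ F i ≠ F j := by
      rw [Finset.filter_filter]
      apply Finset.filter_congr
      intro F _
      unfold zeroCount
      constructor
      · rintro ⟨⟨_, hne⟩, hzs⟩; exact ⟨hzs, hne⟩
      · rintro ⟨hzs, hne⟩; exact ⟨⟨by rw [hzs, hs], hne⟩, hzs⟩
    rw [hset]
    by_cases hi : i ∈ s <;> by_cases hj : j ∈ s <;> simp only [hi, hj, if_true, if_false]
    · -- both zero: empty
      rw [Finset.card_eq_zero, Finset.filter_eq_empty_iff]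
      intro F _
      rintro ⟨hzs, hne⟩
      rw [zfilter_eq] at hzs
      exact hne (((hzs i).2 hi).trans ((hzs j).2 hj).symm)
    · -- i zero, j not: condition automatic
      have : (univ.filter fun F : Fin k → SignType =>
            (univ.filter fun x => F x = 0) = s ∧ F i ≠ F j)
          = univ.filter fun F : Fin k → SignType => (univ.filter fun x => F x = 0) = s := by
        apply Finset.filter_congr
        intro F _
        constructor
        · exact fun h => h.1
        · intro h
          refine ⟨h, ?_⟩
          rw [zfilter_eq] at h
          intro he
          exact hj ((h j).1 (he ▸ (h i).2 hi))
      rw [this, fiber_card, hs]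
    · -- j zero, i not
      have : (univ.filter fun F : Fin k → SignType =>
            (univ.filter fun x => F x = 0) = s ∧ F i ≠ F j)
          = univ.filter fun F : Fin k → SignType => (univ.filter fun x => F x = 0) = s := by
        apply Finset.filter_congr
        intro F _
        constructor
        · exact fun h => h.1
        · intro h
          refine ⟨h, ?_⟩
          rw [zfilter_eq] at h
          intro he
          exact hi ((h i).1 (he ▸ (h j).2 hj))
      rw [this, fiber_card, hs]
    · rw [fiber_half s i j hij hi hj, hs]
  rw [Finset.sum_congr rfl hfib]
  -- now compute the sum of the if-expression
  rw [← Finset.sum_filter_add_sum_filter_not ((univ : Finset (Fin k)).powersetCard r)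
    (fun s => i ∈ s)]
  have h1 : ∑ s ∈ ((univ : Finset (Fin k)).powersetCard r).filter (fun s => i ∈ s),
      (if i ∈ s then (if j ∈ s then 0 else 2 ^ (k - r))
        else (if j ∈ s then 2 ^ (k - r) else 2 ^ (k - r - 1)))
      = ∑ s ∈ ((univ : Finset (Fin k)).powersetCard r).filter (fun s => i ∈ s),
          (if j ∈ s then 0 else 2 ^ (k - r)) := by
    apply Finset.sum_congr rfl
    intro s hs
    rw [mem_filter] at hs
    rw [if_pos hs.2]
  have h2 : ∑ s ∈ ((univ : Finset (Fin k)).powersetCard r).filter (fun s => i ∉ s),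
      (if i ∈ s then (if j ∈ s then 0 else 2 ^ (k - r))
        else (if j ∈ s then 2 ^ (k - r) else 2 ^ (k - r - 1)))
      = ∑ s ∈ ((univ : Finset (Fin k)).powersetCard r).filter (fun s => i ∉ s),
          (if j ∈ s then 2 ^ (k - r) else 2 ^ (k - r - 1)) := by
    apply Finset.sum_congr rfl
    intro s hs
    rw [mem_filter] at hs
    rw [if_neg hs.2]
  rw [h1, h2, Finset.sum_ite, Finset.sum_ite]
  simp only [Finset.sum_const, smul_eq_mul, Finset.filter_filter, Finset.sum_const_zero, zero_add]
  have e10 : (((univ : Finset (Fin k)).powersetCard r).filter fun s => i ∈ s ∧ ¬ j ∈ s).card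
      = if r = 0 then 0 else Nat.choose (k - 2) (r - 1) := by
    split_ifs with h0
    · subst h0
      rw [Finset.card_eq_zero, Finset.filter_eq_empty_iff]
      intro s hs
      rw [mem_powersetCard_univ, Finset.card_eq_zero] at hs
      subst hs
      rintro ⟨h, _⟩
      exact absurd h (notMem_empty i)
    · exact cardT10 i j hij (Nat.one_le_iff_ne_zero.mpr h0)
  have e01 : (((univ : Finset (Fin k)).powersetCard r).filter fun s => ¬ i ∈ s ∧ j ∈ s).card
      = if r = 0 then 0 else Nat.choose (k - 2) (r - 1) := by
    split_ifs with h0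
    · subst h0
      rw [Finset.card_eq_zero, Finset.filter_eq_empty_iff]
      intro s hs
      rw [mem_powersetCard_univ, Finset.card_eq_zero] at hs
      subst hs
      rintro ⟨_, h⟩
      exact absurd h (notMem_empty j)
    · exact cardT01 i j hij (Nat.one_le_iff_ne_zero.mpr h0)
  have e00 : (((univ : Finset (Fin k)).powersetCard r).filter fun s => ¬ i ∈ s ∧ ¬ j ∈ s).card
      = Nat.choose (k - 2) r := cardT00 i j hij
  rw [e10, e01, e00]
  split_ifs with h0
  · ring
  · have hp : 2 ^ (k - r + 1) = 2 ^ (k - r) * 2 := by rw [pow_succ]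
    rw [hp]
    ring

end CubeHelpers

/-- A coordinate transposition `(i j)` (with no sign flips) induces, on the rank-`r` faces of
the `k`-dimensional hypercube with `r < k - 1`, an involution that moves exactly the faces `F`
with `F(i) ≠ F(j)`; these number `2^(k-r)((1/2)C(k-2,r) + 2C(k-2,r-1))`, and the permutation
factorizes into half as many disjoint transpositions. -/
theorem hypercube_transposition_action (k r : ℕ) (hr : r + 1 < k) (i j : Fin k) (hij : i ≠ j) :
    (∀ F : {F : Fin k → SignType // zeroCount F = r},
        cubeRankPerm (fun _ => false) (Equiv.swap i j) r F ≠ F ↔ F.1 i ≠ F.1 j) ∧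
    (cubeRankPerm (fun _ => false) (Equiv.swap i j) r) *
        (cubeRankPerm (fun _ => false) (Equiv.swap i j) r) = 1 ∧
    (Finset.univ.filter fun F : {F : Fin k → SignType // zeroCount F = r} =>
        cubeRankPerm (fun _ => false) (Equiv.swap i j) r F ≠ F).card =
      2 ^ (k - r - 1) * Nat.choose (k - 2) r +
        (if r = 0 then 0 else 2 ^ (k - r + 1) * Nat.choose (k - 2) (r - 1)) := by
  classical
  have hne : ∀ F : {F : Fin k → SignType // zeroCount F = r},
      cubeRankPerm (fun _ => false) (Equiv.swap i j) r F ≠ F ↔ F.1 i ≠ F.1 j := by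
    intro F
    have happ : ((cubeRankPerm (fun _ => false) (Equiv.swap i j) r) F).1
        = fun x => F.1 ((Equiv.swap i j)⁻¹ x) := rfl
    rw [Ne, Subtype.ext_iff, happ, Equiv.swap_inv]
    apply not_congr
    constructor
    · intro he
      have := congrFun he i
      simpa [Equiv.swap_apply_left] using this.symm
    · intro he
      funext x
      rcases eq_or_ne x i with rfl | hxi
      · simp [Equiv.swap_apply_left, he]
      rcases eq_or_ne x j with rfl | hxj
      · simp [Equiv.swap_apply_right, he]
      · simp [Equiv.swap_apply_of_ne_of_ne hxi hxj]
  refine ⟨hne, ?_, ?_⟩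
  · ext F x
    show F.1 ((Equiv.swap i j)⁻¹ ((Equiv.swap i j)⁻¹ x)) = F.1 x
    rw [Equiv.swap_inv, Equiv.swap_apply_self]
  · have hfc : (Finset.univ.filter fun F : {F : Fin k → SignType // zeroCount F = r} =>
        cubeRankPerm (fun _ => false) (Equiv.swap i j) r F ≠ F)
        = Finset.univ.filter fun F : {F : Fin k → SignType // zeroCount F = r} =>
            F.1 i ≠ F.1 j := by
      apply Finset.filter_congr
      intro F _
      exact hne F
    rw [hfc]
    have hbij : (Finset.univ.filter fun F : {F : Fin k → SignType // zeroCount F = r} =>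
          F.1 i ≠ F.1 j).card
        = (Finset.univ.filter fun F : Fin k → SignType =>
            zeroCount F = r ∧ F i ≠ F j).card := by
      apply Finset.card_bij (fun F _ => F.1)
      · intro F hF
        rw [Finset.mem_filter] at hF ⊢
        exact ⟨Finset.mem_univ _, F.2, hF.2⟩
      · intro F _ G _ h
        exact Subtype.ext h
      · intro F hF
        rw [Finset.mem_filter] at hF
        exact ⟨⟨F, hF.2.1⟩, Finset.mem_filter.mpr ⟨Finset.mem_univ _, hF.2.2⟩, rfl⟩
    rw [hbij]
    exact count_main hr i j hij
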